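/- Let T_p > 0, β > 0, and M ≥ 0. Suppose H : ℝ² × ℝ × ℝ → ℝ satisfies conditions (R1)–(R2), is T_p-periodic in its time argument (H((z, t + T_p), u, p) = H((z, t), u, p) for all z, t, u, p), and satisfies the monotonicity condition H((z,t), r, p) − H((z,t), s, p) ≥ β·(r − s) for all (z,t), p and all r ≥ s. Let v : ℝ² → ℝ be bounded and uniformly continuous on ℝ × [0, ∞) with |v| ≤ M, and a viscosity solution on ℝ × (0, ∞) of ∂_t f + H((z,t), f, ∂_z f) = 0. Then for every w ≥ 0, sup_{z ∈ ℝ} |v(z, w + T_p) − v(z, w)| ≤ 2·M·e^{−β·w}; consequently, for each τ ∈ [0, T_p] the sequence of functions z ↦ v(z, m·T_p + τ) converges uniformly on ℝ as m → ∞, and the limit function h(z, τ) := lim_{m → ∞} v(z, m·T_p + τ) satisfies h(z, 0) = h(z, T_p) for all z. -/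

import Mathlib

open Set Filter

/-- `u` is a viscosity subsolution of `F (y, u y, Du y) = 0` on the open set `U ⊆ ℝ²`. -/
def IsViscositySubsolnOn (F : (ℝ × ℝ) → ℝ → (ℝ × ℝ) → ℝ) (u : ℝ × ℝ → ℝ)
    (U : Set (ℝ × ℝ)) : Prop :=
  ContinuousOn u U ∧
    ∀ φ : (ℝ × ℝ) → ℝ, ContDiff ℝ 2 φ → ∀ y ∈ U,
      IsLocalMax (fun p => u p - φ p) y →
        F y (u y) (fderiv ℝ φ y (1, 0), fderiv ℝ φ y (0, 1)) ≤ 0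

/-- `u` is a viscosity supersolution of `F (y, u y, Du y) = 0` on the open set `U ⊆ ℝ²`. -/
def IsViscositySupersolnOn (F : (ℝ × ℝ) → ℝ → (ℝ × ℝ) → ℝ) (u : ℝ × ℝ → ℝ)
    (U : Set (ℝ × ℝ)) : Prop :=
  ContinuousOn u U ∧
    ∀ φ : (ℝ × ℝ) → ℝ, ContDiff ℝ 2 φ → ∀ y ∈ U,
      IsLocalMin (fun p => u p - φ p) y →
        0 ≤ F y (u y) (fderiv ℝ φ y (1, 0), fderiv ℝ φ y (0, 1))

/-- `u` is a viscosity solution of `F (y, u y, Du y) = 0` on the open set `U ⊆ ℝ²`. -/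
def IsViscositySolnOn (F : (ℝ × ℝ) → ℝ → (ℝ × ℝ) → ℝ) (u : ℝ × ℝ → ℝ)
    (U : Set (ℝ × ℝ)) : Prop :=
  IsViscositySubsolnOn F u U ∧ IsViscositySupersolnOn F u U

/-- A modulus of continuity. -/
def IsModulus (ω : ℝ → ℝ) : Prop :=
  Monotone ω ∧ ω 0 = 0 ∧ (∀ s, 0 ≤ s → 0 ≤ ω s) ∧
    Tendsto ω (nhdsWithin 0 (Ioi 0)) (nhds 0)

/-- Conditions (R1)–(R2) on a Hamiltonian `H (y, u, p)`. -/
def SatisfiesR1R2 (H : (ℝ × ℝ) → ℝ → ℝ → ℝ) : Prop :=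
  UniformContinuous (fun x : (ℝ × ℝ) × ℝ × ℝ => H x.1 x.2.1 x.2.2) ∧
    ∃ ω : ℝ → ℝ, IsModulus ω ∧
      (∀ (y₁ y₂ : ℝ × ℝ) (u p₁ p₂ : ℝ),
        |H y₁ u p₁ - H y₂ u p₂| ≤ ω (‖y₁ - y₂‖ + |p₁ - p₂|)) ∧
      (∀ (y₁ y₂ : ℝ × ℝ) (u p : ℝ),
        |H y₁ u p - H y₂ u p| ≤ ω (‖y₁ - y₂‖ * (1 + |p|)))

lemma modulus_small {ω : ℝ → ℝ} (hω : IsModulus ω) {γ : ℝ} (hγ : 0 < γ) :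
    ∃ s₀ > 0, ω s₀ < γ := by
  have h1 : ∀ᶠ s in nhdsWithin 0 (Ioi 0), ω s < γ :=
    hω.2.2.2.eventually_lt_const hγ
  have h2 : ∀ᶠ s in nhdsWithin (0:ℝ) (Ioi 0), s ∈ Ioi (0:ℝ) := eventually_mem_nhdsWithin
  obtain ⟨s₀, hs₁, hs₂⟩ := (h1.and h2).exists
  exact ⟨s₀, hs₂, hs₁⟩


lemma part2 (Tp β M : ℝ) (hTp : 0 < Tp) (hβ : 0 < β) (hM : 0 ≤ M) (v : ℝ × ℝ → ℝ)
    (bound : ∀ w : ℝ, 0 ≤ w → ∀ z : ℝ,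
      |v (z, w + Tp) - v (z, w)| ≤ 2 * M * Real.exp (-(β * w))) :
    ∃ h : ℝ → ℝ → ℝ,
      (∀ τ ∈ Icc (0 : ℝ) Tp,
        TendstoUniformly (fun (m : ℕ) (z : ℝ) => v (z, m * Tp + τ)) (fun z => h z τ)
          atTop) ∧
      ∀ z : ℝ, h z 0 = h z Tp := by
  set r : ℝ := Real.exp (-(β * Tp)) with hr_def
  have hr0 : 0 ≤ r := (Real.exp_pos _).le
  have hr1 : r < 1 := Real.exp_lt_one_iff.mpr (by nlinarith)
  have key : ∀ τ : ℝ, 0 ≤ τ → ∀ z : ℝ, ∀ m : ℕ,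
      dist (v (z, m * Tp + τ)) (v (z, (m+1 : ℕ) * Tp + τ)) ≤ (2*M) * r ^ m := by
    intro τ hτ z m
    have hw : (0:ℝ) ≤ m * Tp + τ := by positivity
    have hb := bound (m * Tp + τ) hw z
    have heq : ((m+1 : ℕ) : ℝ) * Tp + τ = (m * Tp + τ) + Tp := by push_cast; ring
    rw [Real.dist_eq, abs_sub_comm, heq]
    calc |v (z, m * Tp + τ + Tp) - v (z, m * Tp + τ)|
        ≤ 2 * M * Real.exp (-(β * (m * Tp + τ))) := hb
      _ ≤ (2*M) * r ^ m := by
          rw [← Real.exp_nat_mul]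
          have : -(β * (↑m * Tp + τ)) ≤ ↑m * -(β * Tp) := by nlinarith [Nat.cast_nonneg (α := ℝ) m]
          have := Real.exp_le_exp.mpr this
          nlinarith [Real.exp_pos (-(β * (↑m * Tp + τ)))]
  have hcauchy : ∀ τ : ℝ, 0 ≤ τ → ∀ z : ℝ, CauchySeq (fun m : ℕ => v (z, m * Tp + τ)) :=
    fun τ hτ z => cauchySeq_of_le_geometric r (2*M) hr1 (key τ hτ z)
  refine ⟨fun z τ => limUnder atTop (fun m : ℕ => v (z, m * Tp + τ)), ?_, ?_⟩
  · intro τ hτ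
    have htend : ∀ z, Tendsto (fun m : ℕ => v (z, m * Tp + τ)) atTop
        (nhds (limUnder atTop (fun m : ℕ => v (z, m * Tp + τ)))) :=
      fun z => (hcauchy τ hτ.1 z).tendsto_limUnder
    rw [Metric.tendstoUniformly_iff]
    intro ε hε
    have hto : Tendsto (fun m : ℕ => (2*M) * r ^ m / (1 - r)) atTop (nhds 0) := by
      have := tendsto_pow_atTop_nhds_zero_of_lt_one hr0 hr1
      have h2 := (this.const_mul (2*M)).div_const (1 - r)
      simpa using h2
    filter_upwards [hto.eventually_lt_const hε] with m hm z
    have := dist_le_of_le_geometric_of_tendsto r (2*M) hr1 (key τ hτ.1 z) (htend z) m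
    calc dist (limUnder atTop (fun m : ℕ => v (z, m * Tp + τ))) (v (z, m * Tp + τ))
        = dist (v (z, m * Tp + τ)) (limUnder atTop (fun m : ℕ => v (z, m * Tp + τ))) :=
          dist_comm _ _
      _ ≤ (2*M) * r ^ m / (1 - r) := this
      _ < ε := hm
  · intro z
    have h0 : Tendsto (fun m : ℕ => v (z, m * Tp + 0)) atTop
        (nhds (limUnder atTop (fun m : ℕ => v (z, m * Tp + 0)))) :=
      (hcauchy 0 le_rfl z).tendsto_limUnder
    have hT : Tendsto (fun m : ℕ => v (z, m * Tp + Tp)) atTop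
        (nhds (limUnder atTop (fun m : ℕ => v (z, m * Tp + Tp)))) :=
      (hcauchy Tp hTp.le z).tendsto_limUnder
    have hshift : Tendsto (fun m : ℕ => v (z, (m+1 : ℕ) * Tp + 0)) atTop
        (nhds (limUnder atTop (fun m : ℕ => v (z, m * Tp + 0)))) :=
      h0.comp (tendsto_add_atTop_nat 1)
    have heq : (fun m : ℕ => v (z, (m+1 : ℕ) * Tp + 0)) = fun m : ℕ => v (z, m * Tp + Tp) := by
      funext m; congr 1; push_cast; ring_nf
    rw [heq] at hshift
    exact tendsto_nhds_unique hT hshift |>.symm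

noncomputable def gmap (Tp : ℝ) : ℝ × ℝ → ℝ × ℝ := fun q => (q.1, q.2 - Tp)
noncomputable def Tmap (Tp : ℝ) : ℝ × ℝ → ℝ × ℝ := fun q => (q.1, q.2 + Tp)

lemma gmap_Tmap (Tp : ℝ) (q : ℝ × ℝ) : gmap Tp (Tmap Tp q) = q := by
  simp [gmap, Tmap]

lemma Tmap_gmap (Tp : ℝ) (q : ℝ × ℝ) : Tmap Tp (gmap Tp q) = q := by
  simp [gmap, Tmap]

lemma fderiv_comp_gmap (Tp : ℝ) (φ : (ℝ × ℝ) → ℝ) (hφ : ContDiff ℝ 2 φ) (y : ℝ × ℝ) :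
    fderiv ℝ (fun q => φ (gmap Tp q)) (Tmap Tp y) = fderiv ℝ φ y := by
  have hgeq : gmap Tp = fun q : ℝ × ℝ => q - ((0:ℝ), Tp) := by
    funext q; simp [gmap, Prod.ext_iff]
  have hg : HasFDerivAt (gmap Tp) (ContinuousLinearMap.id ℝ (ℝ × ℝ)) (Tmap Tp y) := by
    rw [hgeq]
    simpa using (hasFDerivAt_id (Tmap Tp y)).sub_const ((0:ℝ), Tp)
  have hφd : HasFDerivAt φ (fderiv ℝ φ y) (gmap Tp (Tmap Tp y)) := by
    rw [gmap_Tmap]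
    exact ((hφ.differentiable (by norm_num)) y).hasFDerivAt
  have h2 : HasFDerivAt (fun q => φ (gmap Tp q)) ((fderiv ℝ φ y).comp
      (ContinuousLinearMap.id ℝ (ℝ × ℝ))) (Tmap Tp y) := hφd.comp (Tmap Tp y) hg
  simpa using h2.fderiv

lemma contDiff_comp_gmap (Tp : ℝ) (φ : (ℝ × ℝ) → ℝ) (hφ : ContDiff ℝ 2 φ) :
    ContDiff ℝ 2 (fun q => φ (gmap Tp q)) := by
  apply hφ.comp
  unfold gmap
  exact (contDiff_fst).prodMk ((contDiff_snd).sub contDiff_const)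

lemma translate_soln (Tp : ℝ) (hTp : 0 < Tp) (H : (ℝ × ℝ) → ℝ → ℝ → ℝ)
    (hper : ∀ (z t u p : ℝ), H (z, t + Tp) u p = H (z, t) u p)
    (v : ℝ × ℝ → ℝ)
    (hsol : IsViscositySolnOn (fun y q p => p.2 + H y q p.1) v (univ ×ˢ Ioi (0 : ℝ))) :
    IsViscositySolnOn (fun y q p => p.2 + H y q p.1) (fun p => v (Tmap Tp p))
      (univ ×ˢ Ioi (0 : ℝ)) := by
  have hmapsTo : MapsTo (Tmap Tp) (univ ×ˢ Ioi (0:ℝ)) (univ ×ˢ Ioi (0:ℝ)) := by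
    intro p hp
    rcases (mem_prod.mp hp) with ⟨_, hp2⟩
    exact mem_prod.mpr ⟨mem_univ _, by simpa [Tmap] using add_pos hp2 hTp⟩
  have hcont : ContinuousOn (fun p => v (Tmap Tp p)) (univ ×ˢ Ioi (0:ℝ)) :=
    hsol.1.1.comp ((continuous_fst.prodMk (continuous_snd.add continuous_const))).continuousOn
      hmapsTo
  have hTy : ∀ y : ℝ × ℝ, y ∈ (univ ×ˢ Ioi (0:ℝ) : Set (ℝ × ℝ)) →
      Tmap Tp y ∈ (univ ×ˢ Ioi (0:ℝ) : Set (ℝ × ℝ)) := fun y hy => hmapsTo hy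
  have hHper : ∀ (y : ℝ × ℝ) (u p : ℝ), H (Tmap Tp y) u p = H y u p := by
    intro y u p
    have := hper y.1 y.2 u p
    simpa [Tmap] using this
  have hgt : ∀ y : ℝ × ℝ, Tendsto (gmap Tp) (nhds (Tmap Tp y)) (nhds y) := by
    intro y
    have : Continuous (gmap Tp) := continuous_fst.prodMk (continuous_snd.sub continuous_const)
    simpa [gmap_Tmap] using this.tendsto (Tmap Tp y)
  constructor
  · refine ⟨hcont, ?_⟩
    intro φ hφ y hy hmax
    set ψ := fun q => φ (gmap Tp q) with hψdef
    have hψ : ContDiff ℝ 2 ψ := contDiff_comp_gmap Tp φ hφ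
    have hmax' : IsLocalMax (fun q => v q - ψ q) (Tmap Tp y) := by
      have := (hgt y).eventually hmax
      unfold IsLocalMax IsMaxFilter
      filter_upwards [this] with q hq
      have h1 : v (Tmap Tp (gmap Tp q)) = v q := by rw [Tmap_gmap]
      have h2 : φ (gmap Tp (Tmap Tp y)) = φ y := by rw [gmap_Tmap]
      simpa [ψ, gmap_Tmap, h1] using hq
    have := hsol.1.2 ψ hψ (Tmap Tp y) (hTy y hy) hmax'
    simp only [hψdef, fderiv_comp_gmap Tp φ hφ y] at this
    have hv : v (Tmap Tp y) = (fun p => v (Tmap Tp p)) y := rfl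
    rw [hHper y] at this
    exact this
  · refine ⟨hcont, ?_⟩
    intro φ hφ y hy hmin
    set ψ := fun q => φ (gmap Tp q) with hψdef
    have hψ : ContDiff ℝ 2 ψ := contDiff_comp_gmap Tp φ hφ
    have hmin' : IsLocalMin (fun q => v q - ψ q) (Tmap Tp y) := by
      have := (hgt y).eventually hmin
      unfold IsLocalMin IsMinFilter
      filter_upwards [this] with q hq
      have h1 : v (Tmap Tp (gmap Tp q)) = v q := by rw [Tmap_gmap]
      simpa [ψ, gmap_Tmap, h1] using hq
    have := hsol.2.2 ψ hψ (Tmap Tp y) (hTy y hy) hmin'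
    simp only [hψdef, fderiv_comp_gmap Tp φ hφ y] at this
    rw [hHper y] at this
    exact this

lemma phi1_deriv (M β iε δ a b : ℝ) (y : ℝ × ℝ) :
    HasFDerivAt (fun p : ℝ × ℝ => 2*M*Real.exp (-(β*p.2))
        + iε*((p.1-a)*(p.1-a) + (p.2-b)*(p.2-b)) + δ*(p.1*p.1 + p.2))
      ((-(2*M*β*Real.exp (-(β*y.2))) + iε*(2*(y.2-b)) + δ) • ContinuousLinearMap.snd ℝ ℝ ℝ
        + (iε*(2*(y.1-a)) + 2*δ*y.1) • ContinuousLinearMap.fst ℝ ℝ ℝ) y := by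
  have h1 : HasFDerivAt (fun p : ℝ × ℝ => p.1) (ContinuousLinearMap.fst ℝ ℝ ℝ) y :=
    hasFDerivAt_fst
  have h2 : HasFDerivAt (fun p : ℝ × ℝ => p.2) (ContinuousLinearMap.snd ℝ ℝ ℝ) y :=
    hasFDerivAt_snd
  have hexp : HasFDerivAt (fun p : ℝ × ℝ => 2*M*Real.exp (-(β*p.2)))
      ((2*M) • (Real.exp (-(β*y.2)) • (-(β • ContinuousLinearMap.snd ℝ ℝ ℝ)))) y :=
    (((h2.const_mul β).neg).exp).const_mul (2*M)
  have hq1 : HasFDerivAt (fun p : ℝ × ℝ => (p.1-a)*(p.1-a))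
      ((y.1-a) • ContinuousLinearMap.fst ℝ ℝ ℝ + (y.1-a) • ContinuousLinearMap.fst ℝ ℝ ℝ) y :=
    (h1.sub_const a).mul (h1.sub_const a)
  have hq2 : HasFDerivAt (fun p : ℝ × ℝ => (p.2-b)*(p.2-b))
      ((y.2-b) • ContinuousLinearMap.snd ℝ ℝ ℝ + (y.2-b) • ContinuousLinearMap.snd ℝ ℝ ℝ) y :=
    (h2.sub_const b).mul (h2.sub_const b)
  have hpen := (hq1.add hq2).const_mul iε
  have hlin : HasFDerivAt (fun p : ℝ × ℝ => δ*(p.1*p.1 + p.2))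
      (δ • ((y.1 • ContinuousLinearMap.fst ℝ ℝ ℝ + y.1 • ContinuousLinearMap.fst ℝ ℝ ℝ)
        + ContinuousLinearMap.snd ℝ ℝ ℝ)) y := ((h1.mul h1).add h2).const_mul δ
  have htot := (hexp.add hpen).add hlin
  refine htot.congr_fderiv ?_
  ext p
  · simp [ContinuousLinearMap.smul_apply, ContinuousLinearMap.add_apply]
    ring
  · simp [ContinuousLinearMap.smul_apply, ContinuousLinearMap.add_apply]
    ring

lemma phi1_contDiff (M β iε δ a b : ℝ) :
    ContDiff ℝ 2 (fun p : ℝ × ℝ => 2*M*Real.exp (-(β*p.2))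
        + iε*((p.1-a)*(p.1-a) + (p.2-b)*(p.2-b)) + δ*(p.1*p.1 + p.2)) := by
  fun_prop

lemma phi1_eval10 (M β iε δ a b : ℝ) (y : ℝ × ℝ) :
    fderiv ℝ (fun p : ℝ × ℝ => 2*M*Real.exp (-(β*p.2))
        + iε*((p.1-a)*(p.1-a) + (p.2-b)*(p.2-b)) + δ*(p.1*p.1 + p.2)) y (1, 0)
      = iε*(2*(y.1-a)) + 2*δ*y.1 := by
  rw [(phi1_deriv M β iε δ a b y).fderiv]; simp

lemma phi1_eval01 (M β iε δ a b : ℝ) (y : ℝ × ℝ) :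
    fderiv ℝ (fun p : ℝ × ℝ => 2*M*Real.exp (-(β*p.2))
        + iε*((p.1-a)*(p.1-a) + (p.2-b)*(p.2-b)) + δ*(p.1*p.1 + p.2)) y (0, 1)
      = -(2*M*β*Real.exp (-(β*y.2))) + iε*(2*(y.2-b)) + δ := by
  rw [(phi1_deriv M β iε δ a b y).fderiv]; simp

lemma phi2_deriv (iε a b : ℝ) (y : ℝ × ℝ) :
    HasFDerivAt (fun q : ℝ × ℝ => -(iε*((a-q.1)*(a-q.1) + (b-q.2)*(b-q.2))))
      ((iε*(2*(b-y.2))) • ContinuousLinearMap.snd ℝ ℝ ℝ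
        + (iε*(2*(a-y.1))) • ContinuousLinearMap.fst ℝ ℝ ℝ) y := by
  have h1 : HasFDerivAt (fun p : ℝ × ℝ => p.1) (ContinuousLinearMap.fst ℝ ℝ ℝ) y :=
    hasFDerivAt_fst
  have h2 : HasFDerivAt (fun p : ℝ × ℝ => p.2) (ContinuousLinearMap.snd ℝ ℝ ℝ) y :=
    hasFDerivAt_snd
  have hq1 : HasFDerivAt (fun q : ℝ × ℝ => (a-q.1)*(a-q.1))
      ((a-y.1) • (-(ContinuousLinearMap.fst ℝ ℝ ℝ)) + (a-y.1) • (-(ContinuousLinearMap.fst ℝ ℝ ℝ))) y :=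
    (h1.const_sub a).mul (h1.const_sub a)
  have hq2 : HasFDerivAt (fun q : ℝ × ℝ => (b-q.2)*(b-q.2))
      ((b-y.2) • (-(ContinuousLinearMap.snd ℝ ℝ ℝ)) + (b-y.2) • (-(ContinuousLinearMap.snd ℝ ℝ ℝ))) y :=
    (h2.const_sub b).mul (h2.const_sub b)
  have htot := ((hq1.add hq2).const_mul iε).neg
  refine htot.congr_fderiv ?_
  ext p
  · simp [ContinuousLinearMap.smul_apply, ContinuousLinearMap.add_apply]
    ring
  · simp [ContinuousLinearMap.smul_apply, ContinuousLinearMap.add_apply]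
    ring

lemma phi2_contDiff (iε a b : ℝ) :
    ContDiff ℝ 2 (fun q : ℝ × ℝ => -(iε*((a-q.1)*(a-q.1) + (b-q.2)*(b-q.2)))) := by
  fun_prop

lemma phi2_eval10 (iε a b : ℝ) (y : ℝ × ℝ) :
    fderiv ℝ (fun q : ℝ × ℝ => -(iε*((a-q.1)*(a-q.1) + (b-q.2)*(b-q.2)))) y (1, 0)
      = iε*(2*(a-y.1)) := by
  rw [(phi2_deriv iε a b y).fderiv]; simp

lemma phi2_eval01 (iε a b : ℝ) (y : ℝ × ℝ) :
    fderiv ℝ (fun q : ℝ × ℝ => -(iε*((a-q.1)*(a-q.1) + (b-q.2)*(b-q.2)))) y (0, 1)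
      = iε*(2*(b-y.2)) := by
  rw [(phi2_deriv iε a b y).fderiv]; simp

noncomputable def PhiFun (β M iε δ : ℝ) (u₁ u₂ : ℝ × ℝ → ℝ) (p q : ℝ × ℝ) : ℝ :=
  u₁ p - u₂ q - 2*M*Real.exp (-(β*p.2))
    - iε*((p.1-q.1)*(p.1-q.1)+(p.2-q.2)*(p.2-q.2)) - δ*(p.1*p.1+p.2)

lemma abs_le_sqrt' {a B : ℝ} (h : a*a ≤ B) : |a| ≤ Real.sqrt B := by
  rw [← Real.sqrt_mul_self_eq_abs]
  exact Real.sqrt_le_sqrt h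

lemma abs_le_of_mul_self_le {a C : ℝ} (hC : 0 ≤ C) (h : a*a ≤ C*C) : |a| ≤ C := by
  have h2 := abs_le_sqrt' h
  rwa [Real.sqrt_mul_self hC] at h2

lemma exists_max (β M iε δ S : ℝ) (hβ : 0 < β) (hM : 0 < M) (hiε : 0 < iε)
    (hδ : 0 < δ) (hS : 0 < S)
    (u₁ u₂ : ℝ × ℝ → ℝ)
    (hb1 : ∀ p : ℝ × ℝ, 0 ≤ p.2 → |u₁ p| ≤ M)
    (hb2 : ∀ p : ℝ × ℝ, 0 ≤ p.2 → |u₂ p| ≤ M)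
    (hc1 : ContinuousOn u₁ (univ ×ˢ Ici (0:ℝ)))
    (hc2 : ContinuousOn u₂ (univ ×ˢ Ici (0:ℝ)))
    (z w : ℝ) (hw : 0 ≤ w)
    (hstart : S/2 ≤ PhiFun β M iε δ u₁ u₂ (z,w) (z,w)) :
    ∃ zb tb zc tc : ℝ, 0 ≤ tb ∧ 0 ≤ tc ∧
      (∀ p q : ℝ × ℝ, 0 ≤ p.2 → 0 ≤ q.2 →
        PhiFun β M iε δ u₁ u₂ p q ≤ PhiFun β M iε δ u₁ u₂ (zb,tb) (zc,tc)) ∧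
      S/2 ≤ PhiFun β M iε δ u₁ u₂ (zb,tb) (zc,tc) := by
  set Dom : Set ((ℝ×ℝ)×(ℝ×ℝ)) := (univ ×ˢ Ici 0) ×ˢ (univ ×ˢ Ici 0) with hDom
  set Ψ : (ℝ×ℝ)×(ℝ×ℝ) → ℝ := fun x => PhiFun β M iε δ u₁ u₂ x.1 x.2 with hΨ
  set K : Set ((ℝ×ℝ)×(ℝ×ℝ)) := Dom ∩ Ψ ⁻¹' (Ici (S/2)) with hK
  have hDomClosed : IsClosed Dom := ((isClosed_univ.prod isClosed_Ici).prod
    (isClosed_univ.prod isClosed_Ici))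
  have hΨcont : ContinuousOn Ψ Dom := by
    have hONE : ContinuousOn (fun x : (ℝ×ℝ)×(ℝ×ℝ) => u₁ x.1) Dom :=
      hc1.comp continuous_fst.continuousOn (fun x hx => hx.1)
    have hTWO : ContinuousOn (fun x : (ℝ×ℝ)×(ℝ×ℝ) => u₂ x.2) Dom :=
      hc2.comp continuous_snd.continuousOn (fun x hx => hx.2)
    have hREST : Continuous (fun x : (ℝ×ℝ)×(ℝ×ℝ) =>
        2*M*Real.exp (-(β*x.1.2))
        + iε*((x.1.1-x.2.1)*(x.1.1-x.2.1)+(x.1.2-x.2.2)*(x.1.2-x.2.2))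
        + δ*(x.1.1*x.1.1+x.1.2)) := by fun_prop
    have : ContinuousOn (fun x : (ℝ×ℝ)×(ℝ×ℝ) =>
        u₁ x.1 - u₂ x.2 - (2*M*Real.exp (-(β*x.1.2))
        + iε*((x.1.1-x.2.1)*(x.1.1-x.2.1)+(x.1.2-x.2.2)*(x.1.2-x.2.2))
        + δ*(x.1.1*x.1.1+x.1.2))) Dom :=
      (hONE.sub hTWO).sub hREST.continuousOn
    have heq : Ψ = fun x : (ℝ×ℝ)×(ℝ×ℝ) =>
        u₁ x.1 - u₂ x.2 - (2*M*Real.exp (-(β*x.1.2))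
        + iε*((x.1.1-x.2.1)*(x.1.1-x.2.1)+(x.1.2-x.2.2)*(x.1.2-x.2.2))
        + δ*(x.1.1*x.1.1+x.1.2)) := by
      funext x; simp only [hΨ, PhiFun]; ring
    rw [heq]
    exact this
  have hKclosed : IsClosed K :=
    hΨcont.preimage_isClosed_of_isClosed hDomClosed isClosed_Ici
  -- bounds on K
  set R : ℝ := Real.sqrt (2*M/δ) + Real.sqrt (2*M/iε) + 2*M/δ + 1 with hR
  have hRpos : 0 < R := by positivity
  have hKsub : K ⊆ (Icc (-R) R ×ˢ Icc (-R) R) ×ˢ (Icc (-R) R ×ˢ Icc (-R) R) := by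
    rintro ⟨⟨a, b⟩, ⟨e, f⟩⟩ ⟨hdom, hval⟩
    have hb0 : 0 ≤ b := hdom.1.2
    have hf0 : 0 ≤ f := hdom.2.2
    have hval' : S/2 ≤ u₁ (a,b) - u₂ (e,f) - 2*M*Real.exp (-(β*b))
        - iε*((a-e)*(a-e)+(b-f)*(b-f)) - δ*(a*a+b) := hval
    have h2M : u₁ (a,b) - u₂ (e,f) ≤ 2*M := by
      have h1 := abs_le.mp (hb1 (a,b) hb0)
      have h2 := abs_le.mp (hb2 (e,f) hf0)
      linarith [h1.2, h2.1]
    have hexp0 : 0 ≤ 2*M*Real.exp (-(β*b)) := by positivity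
    have hq1 : 0 ≤ (a-e)*(a-e) := mul_self_nonneg _
    have hq2 : 0 ≤ (b-f)*(b-f) := mul_self_nonneg _
    have haa : 0 ≤ a*a := mul_self_nonneg _
    -- individual bounds
    have hBa : δ*(a*a) ≤ 2*M := by nlinarith
    have hBb : δ*b ≤ 2*M := by nlinarith
    have hBd1 : iε*((a-e)*(a-e)) ≤ 2*M := by nlinarith
    have hBd2 : iε*((b-f)*(b-f)) ≤ 2*M := by nlinarith
    have haR : |a| ≤ Real.sqrt (2*M/δ) := by
      apply abs_le_sqrt'
      rw [le_div_iff₀ hδ]; linarith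
    have hd1R : |a-e| ≤ Real.sqrt (2*M/iε) := by
      apply abs_le_sqrt'
      rw [le_div_iff₀ hiε]; linarith
    have hd2R : |b-f| ≤ Real.sqrt (2*M/iε) := by
      apply abs_le_sqrt'
      rw [le_div_iff₀ hiε]; linarith
    have hbR : b ≤ 2*M/δ := by rw [le_div_iff₀ hδ] at *; linarith
    have haabs := abs_le.mp haR
    have hd1abs := abs_le.mp hd1R
    have hd2abs := abs_le.mp hd2R
    have hs1 : 0 ≤ Real.sqrt (2*M/δ) := Real.sqrt_nonneg _
    have hs2 : 0 ≤ Real.sqrt (2*M/iε) := Real.sqrt_nonneg _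
    have hMδ : 0 ≤ 2*M/δ := by positivity
    refine ⟨⟨⟨?_, ?_⟩, ?_, ?_⟩, ⟨?_, ?_⟩, ?_, ?_⟩ <;>
      simp only [hR] <;> first
      | (constructor <;> linarith [hd1abs.1, hd1abs.2, hd2abs.1, hd2abs.2])
      | linarith [hd1abs.1, hd1abs.2, hd2abs.1, hd2abs.2]
  have hKcompact : IsCompact K := by
    apply IsCompact.of_isClosed_subset ?_ hKclosed hKsub
    exact ((isCompact_Icc.prod isCompact_Icc).prod (isCompact_Icc.prod isCompact_Icc))
  have hKne : K.Nonempty := by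
    refine ⟨((z,w),(z,w)), ⟨?_, ?_⟩⟩
    · exact ⟨⟨mem_univ _, hw⟩, ⟨mem_univ _, hw⟩⟩
    · exact hstart
  obtain ⟨xbar, hxK, hxmax⟩ := hKcompact.exists_isMaxOn hKne
    (hΨcont.mono (fun x hx => hx.1))
  obtain ⟨⟨zb, tb⟩, ⟨zc, tc⟩⟩ := xbar
  refine ⟨zb, tb, zc, tc, hxK.1.1.2, hxK.1.2.2, ?_, hxK.2⟩
  intro p q hp hq
  by_cases hcase : S/2 ≤ PhiFun β M iε δ u₁ u₂ p q
  · have hmem : (p, q) ∈ K := ⟨⟨⟨mem_univ _, hp⟩, ⟨mem_univ _, hq⟩⟩, hcase⟩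
    exact hxmax hmem
  · push_neg at hcase
    have h0 := hxmax hKne.choose_spec
    have : Ψ ((z,w),(z,w)) ≤ Ψ ((zb,tb),(zc,tc)) := hxmax ⟨⟨⟨mem_univ _, hw⟩, ⟨mem_univ _, hw⟩⟩, hstart⟩
    have h1 : S/2 ≤ Ψ ((zb,tb),(zc,tc)) := le_trans hstart this
    exact le_trans hcase.le h1

set_option maxHeartbeats 1000000 in
lemma core (β M : ℝ) (hβ : 0 < β) (hM : 0 < M)
    (H : (ℝ × ℝ) → ℝ → ℝ → ℝ) (ω : ℝ → ℝ)
    (hωmono : Monotone ω)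
    (hω1 : ∀ (y₁ y₂ : ℝ × ℝ) (u p₁ p₂ : ℝ),
        |H y₁ u p₁ - H y₂ u p₂| ≤ ω (‖y₁ - y₂‖ + |p₁ - p₂|))
    (hmono : ∀ (y : ℝ × ℝ) (p r s : ℝ), s ≤ r → β * (r - s) ≤ H y r p - H y s p)
    (u₁ u₂ : ℝ × ℝ → ℝ)
    (hsub : IsViscositySubsolnOn (fun y q p => p.2 + H y q p.1) u₁ (univ ×ˢ Ioi (0:ℝ)))
    (hsup : IsViscositySupersolnOn (fun y q p => p.2 + H y q p.1) u₂ (univ ×ˢ Ioi (0:ℝ)))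
    (hb1 : ∀ p : ℝ × ℝ, 0 ≤ p.2 → |u₁ p| ≤ M)
    (hb2 : ∀ p : ℝ × ℝ, 0 ≤ p.2 → |u₂ p| ≤ M)
    (hcont1 : ContinuousOn u₁ (univ ×ˢ Ici (0:ℝ)))
    (hcont2 : ContinuousOn u₂ (univ ×ˢ Ici (0:ℝ)))
    (hinit : ∀ z : ℝ, u₁ (z, 0) - u₂ (z, 0) ≤ 2*M)
    (S : ℝ) (hS : 0 < S)
    (s₀ : ℝ) (hs₀ : 0 < s₀) (hωs₀ : ω s₀ < β*S/2)
    (ρ : ℝ) (hρ : 0 < ρ)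
    (hucρ : ∀ p q : ℝ × ℝ, 0 ≤ p.2 → 0 ≤ q.2 → dist p q ≤ ρ →
        |u₁ p - u₁ q| ≤ S/8 ∧ |u₂ p - u₂ q| ≤ S/8)
    (z w : ℝ) (hw : 0 ≤ w)
    (hSdef : S = u₁ (z,w) - u₂ (z,w) - 2*M*Real.exp (-(β*w))) : False := by
  have h2M : (0:ℝ) < 2*M := by linarith
  -- choice of δ
  obtain ⟨δ, hδ0, hδ1, hδ2⟩ : ∃ δ : ℝ, 0 < δ ∧ δ*(z*z+w) ≤ S/2 ∧ 32*M*δ ≤ s₀^2 := by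
    refine ⟨min (S/(2*(z*z+w+1))) (s₀^2/(32*M)), ?_, ?_, ?_⟩
    · have hQpos : (0:ℝ) < z*z+w+1 := by nlinarith [mul_self_nonneg z]
      exact lt_min (by positivity) (by positivity)
    · have hQpos : (0:ℝ) < z*z+w+1 := by nlinarith [mul_self_nonneg z]
      have hle : min (S/(2*(z*z+w+1))) (s₀^2/(32*M)) ≤ S/(2*(z*z+w+1)) := min_le_left _ _
      have hge : 0 < min (S/(2*(z*z+w+1))) (s₀^2/(32*M)) :=
        lt_min (by positivity) (by positivity)
      have hmul : S/(2*(z*z+w+1)) * (2*(z*z+w+1)) = S := div_mul_cancel₀ _ (by positivity)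
      nlinarith [mul_self_nonneg z, hw]
    · have hle : min (S/(2*(z*z+w+1))) (s₀^2/(32*M)) ≤ s₀^2/(32*M) := min_le_right _ _
      have hmul : s₀^2/(32*M) * (32*M) = s₀^2 := div_mul_cancel₀ _ (by positivity)
      nlinarith
  -- choice of c
  obtain ⟨c, hc0, hcρ, hcs₀, h2Mβc⟩ : ∃ c : ℝ, 0 < c ∧ c ≤ ρ/2 ∧ c ≤ s₀/4 ∧
      2*M*β*c ≤ S/8 := by
    refine ⟨min (min (ρ/2) (s₀/4)) (S/(16*M*β+1)), ?_, ?_, ?_, ?_⟩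
    · exact lt_min (lt_min (by positivity) (by positivity)) (by positivity)
    · exact le_trans (min_le_left _ _) (min_le_left _ _)
    · exact le_trans (min_le_left _ _) (min_le_right _ _)
    · have hle : min (min (ρ/2) (s₀/4)) (S/(16*M*β+1)) ≤ S/(16*M*β+1) := min_le_right _ _
      have hge : 0 < min (min (ρ/2) (s₀/4)) (S/(16*M*β+1)) :=
        lt_min (lt_min (by positivity) (by positivity)) (by positivity)
      have hmul : S/(16*M*β+1) * (16*M*β+1) = S := div_mul_cancel₀ _ (by positivity)
      nlinarith
  -- choice of iε
  obtain ⟨iε, hiε0, hiεc⟩ : ∃ iε : ℝ, 0 < iε ∧ iε * (c*c) = 2*M := by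
    refine ⟨(2*M)/(c*c), by positivity, ?_⟩
    exact div_mul_cancel₀ _ (by positivity)
  -- starting point value
  have hstart : S/2 ≤ PhiFun β M iε δ u₁ u₂ (z,w) (z,w) := by
    simp only [PhiFun]
    have hz : ((z-z)*(z-z)+(w-w)*(w-w)) = 0 := by ring
    rw [hz]
    simp only [mul_zero]
    linarith [hδ1]
  obtain ⟨zb, tb, zc, tc, htb0, htc0, hglob, hA⟩ :=
    exists_max β M iε δ S hβ hM hiε0 hδ0 hS u₁ u₂ hb1 hb2 hcont1 hcont2 z w hw hstart
  have hAx : S/2 ≤ u₁ (zb,tb) - u₂ (zc,tc) - 2*M*Real.exp (-(β*tb))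
      - iε*((zb-zc)*(zb-zc)+(tb-tc)*(tb-tc)) - δ*(zb*zb+tb) := by
    simpa [PhiFun] using hA
  -- basic facts at the max
  have hpen1 : 0 ≤ iε*((zb-zc)*(zb-zc)) := mul_nonneg hiε0.le (mul_self_nonneg _)
  have hpen2 : 0 ≤ iε*((tb-tc)*(tb-tc)) := mul_nonneg hiε0.le (mul_self_nonneg _)
  have hδterm : 0 ≤ δ*(zb*zb+tb) := by
    apply mul_nonneg hδ0.le; nlinarith [mul_self_nonneg zb]
  have hexppos : 0 < Real.exp (-(β*tb)) := Real.exp_pos _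
  have h2Mb : u₁ (zb,tb) - u₂ (zc,tc) ≤ 2*M := by
    have h1 := abs_le.mp (hb1 (zb,tb) htb0)
    have h2 := abs_le.mp (hb2 (zc,tc) htc0)
    linarith [h1.2, h2.1]
  have hexpterm : 0 ≤ 2*M*Real.exp (-(β*tb)) := by positivity
  have hq1M : iε*((zb-zc)*(zb-zc)) ≤ 2*M := by
    linarith [hAx, hpen2, hδterm, h2Mb, hexpterm, hS]
  have hq2M : iε*((tb-tc)*(tb-tc)) ≤ 2*M := by
    linarith [hAx, hpen1, hδterm, h2Mb, hexpterm, hS]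
  have hd1 : |zb - zc| ≤ c := by
    apply abs_le_of_mul_self_le hc0.le
    rw [← hiεc] at hq1M
    exact le_of_mul_le_mul_left hq1M hiε0
  have hd2 : |tb - tc| ≤ c := by
    apply abs_le_of_mul_self_le hc0.le
    rw [← hiεc] at hq2M
    exact le_of_mul_le_mul_left hq2M hiε0
  have hδtb : 0 ≤ δ*tb := mul_nonneg hδ0.le htb0
  have hδzb : δ*(zb*zb) ≤ 2*M := by
    linarith [hAx, hpen1, hpen2, h2Mb, hexpterm, hS, hδtb]
  have h2δzb : |2*δ*zb| ≤ s₀/2 := by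
    apply abs_le_of_mul_self_le (by positivity)
    have k1 : 4*δ*(δ*(zb*zb)) ≤ 4*δ*(2*M) :=
      mul_le_mul_of_nonneg_left hδzb (by positivity)
    have k2 : 8*(M*δ) ≤ s₀^2/4 := by linarith
    linarith [k1, k2]
  have hgap : 2*M*Real.exp (-(β*tb)) + S/2 ≤ u₁ (zb,tb) - u₂ (zc,tc) := by
    linarith [hAx, hpen1, hpen2, hδterm]
  have hcρ' : c ≤ ρ := by linarith
  -- case tb = 0
  rcases eq_or_lt_of_le htb0 with htb | htb
  · -- tb = 0
    have htb' : tb = 0 := htb.symm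
    subst htb'
    have hdist : dist ((zb,(0:ℝ)) : ℝ × ℝ) ((zc,tc) : ℝ × ℝ) ≤ ρ := by
      rw [Prod.dist_eq]
      apply max_le
      · rw [Real.dist_eq]; exact le_trans hd1 hcρ'
      · rw [Real.dist_eq]; exact le_trans hd2 hcρ'
    have huc2 := (hucρ (zb,0) (zc,tc) le_rfl htc0 hdist).2
    have hzb := hinit zb
    have habs := abs_le.mp huc2
    have hexp1 : Real.exp (-(β*(0:ℝ))) = 1 := by norm_num
    rw [hexp1] at hAx
    linarith [habs.1, habs.2, hpen1, hpen2, hδterm, hS]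
  rcases eq_or_lt_of_le htc0 with htc | htc
  · -- tc = 0
    have htc' : tc = 0 := htc.symm
    subst htc'
    have htbc : tb ≤ c := by
      have := abs_le.mp hd2
      simpa using this.2
    have hdist1 : dist ((zb,tb) : ℝ × ℝ) ((zb,(0:ℝ)) : ℝ × ℝ) ≤ ρ := by
      rw [Prod.dist_eq]
      apply max_le
      · simp [Real.dist_eq]; linarith
      · rw [Real.dist_eq]; rw [abs_of_nonneg (by linarith : (0:ℝ) ≤ tb - 0)]; linarith
    have hdist2 : dist ((zb,(0:ℝ)) : ℝ × ℝ) ((zc,(0:ℝ)) : ℝ × ℝ) ≤ ρ := by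
      rw [Prod.dist_eq]
      apply max_le
      · rw [Real.dist_eq]; exact le_trans hd1 hcρ'
      · simp [Real.dist_eq]; linarith
    have hu1 := abs_le.mp (hucρ (zb,tb) (zb,0) htb0 le_rfl hdist1).1
    have hu2 := abs_le.mp (hucρ (zb,0) (zc,0) le_rfl le_rfl hdist2).2
    have hzb := hinit zb
    have hexplb : 2*M - 2*M*β*tb ≤ 2*M*Real.exp (-(β*tb)) := by
      have he := Real.add_one_le_exp (-(β*tb))
      have he2 := mul_le_mul_of_nonneg_left he (le_of_lt h2M)
      linarith [he2]
    have h2Mβtb : 2*M*β*tb ≤ S/8 := by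
      have := mul_le_mul_of_nonneg_left htbc (by positivity : (0:ℝ) ≤ 2*M*β)
      linarith
    linarith [hAx, hpen1, hpen2, hδterm, hu1.1, hu1.2, hu2.1, hu2.2, hS]
  · -- interior case: 0 < tb, 0 < tc
    have hmem1 : ((zb,tb) : ℝ × ℝ) ∈ (univ ×ˢ Ioi (0:ℝ) : Set (ℝ × ℝ)) := ⟨mem_univ _, htb⟩
    have hmem2 : ((zc,tc) : ℝ × ℝ) ∈ (univ ×ˢ Ioi (0:ℝ) : Set (ℝ × ℝ)) := ⟨mem_univ _, htc⟩
    have hmax1 : IsLocalMax (fun p : ℝ × ℝ => u₁ p -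
        (2*M*Real.exp (-(β*p.2)) + iε*((p.1-zc)*(p.1-zc) + (p.2-tc)*(p.2-tc))
          + δ*(p.1*p.1 + p.2))) (zb,tb) := by
      have hev : ∀ᶠ p : ℝ × ℝ in nhds (zb,tb), 0 < p.2 :=
        continuous_snd.continuousAt.eventually (eventually_gt_nhds htb)
      unfold IsLocalMax IsMaxFilter
      filter_upwards [hev] with p hp
      have hg := hglob p (zc,tc) hp.le htc0
      simp only [PhiFun] at hg
      show u₁ p - (2*M*Real.exp (-(β*p.2)) + iε*((p.1-zc)*(p.1-zc) + (p.2-tc)*(p.2-tc))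
          + δ*(p.1*p.1 + p.2)) ≤ u₁ (zb,tb) - (2*M*Real.exp (-(β*tb))
          + iε*((zb-zc)*(zb-zc) + (tb-tc)*(tb-tc)) + δ*(zb*zb + tb))
      linarith [hg]
    have hmin2 : IsLocalMin (fun q : ℝ × ℝ => u₂ q -
        (-(iε*((zb-q.1)*(zb-q.1) + (tb-q.2)*(tb-q.2))))) (zc,tc) := by
      have hev : ∀ᶠ q : ℝ × ℝ in nhds (zc,tc), 0 < q.2 :=
        continuous_snd.continuousAt.eventually (eventually_gt_nhds htc)
      unfold IsLocalMin IsMinFilter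
      filter_upwards [hev] with q hq
      have hg := hglob (zb,tb) q htb0 hq.le
      simp only [PhiFun] at hg
      show u₂ (zc,tc) - (-(iε*((zb-zc)*(zb-zc) + (tb-tc)*(tb-tc))))
          ≤ u₂ q - (-(iε*((zb-q.1)*(zb-q.1) + (tb-q.2)*(tb-q.2))))
      linarith [hg]
    have E1 : (-(2*M*β*Real.exp (-(β*tb))) + iε*(2*(tb-tc)) + δ)
        + H (zb,tb) (u₁ (zb,tb)) (iε*(2*(zb-zc)) + 2*δ*zb) ≤ 0 := by
      have hE := hsub.2 _ (phi1_contDiff M β iε δ zc tc) (zb,tb) hmem1 hmax1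
      rw [phi1_eval10, phi1_eval01] at hE
      exact hE
    have E2 : 0 ≤ (iε*(2*(tb-tc))) + H (zc,tc) (u₂ (zc,tc)) (iε*(2*(zb-zc))) := by
      have hE := hsup.2 _ (phi2_contDiff iε zb tb) (zc,tc) hmem2 hmin2
      rw [phi2_eval10, phi2_eval01] at hE
      exact hE
    have hord : u₂ (zc,tc) ≤ u₁ (zb,tb) := by nlinarith [hgap, hexppos, h2M]
    have E3 := hmono (zb,tb) (iε*(2*(zb-zc)) + 2*δ*zb) (u₁ (zb,tb)) (u₂ (zc,tc)) hord
    have E4 := hω1 (zb,tb) (zc,tc) (u₂ (zc,tc)) (iε*(2*(zb-zc)) + 2*δ*zb) (iε*(2*(zb-zc)))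
    have hnorm : ‖((zb,tb) : ℝ × ℝ) - ((zc,tc) : ℝ × ℝ)‖ ≤ c := by
      have h1 : ((zb,tb) : ℝ × ℝ) - ((zc,tc) : ℝ × ℝ) = ((zb-zc, tb-tc) : ℝ × ℝ) := rfl
      rw [h1, Prod.norm_def]
      apply max_le
      · rw [Real.norm_eq_abs]; exact hd1
      · rw [Real.norm_eq_abs]; exact hd2
    have hparg : |(iε*(2*(zb-zc)) + 2*δ*zb) - iε*(2*(zb-zc))| = |2*δ*zb| := by
      congr 1; ring
    have harg : ‖((zb,tb) : ℝ × ℝ) - ((zc,tc) : ℝ × ℝ)‖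
        + |(iε*(2*(zb-zc)) + 2*δ*zb) - iε*(2*(zb-zc))| ≤ s₀ := by
      rw [hparg]; linarith [hnorm, h2δzb, hcs₀]
    have E5 : ω (‖((zb,tb) : ℝ × ℝ) - ((zc,tc) : ℝ × ℝ)‖
        + |(iε*(2*(zb-zc)) + 2*δ*zb) - iε*(2*(zb-zc))|) ≤ ω s₀ := hωmono harg
    have E4' := abs_le.mp E4
    have hgapβ : β*(2*M*Real.exp (-(β*tb))) + β*(S/2)
        ≤ β*(u₁ (zb,tb) - u₂ (zc,tc)) := by
      have hb2' := mul_le_mul_of_nonneg_left hgap hβ.le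
      linarith [hb2']
    linarith [E1, E2, E3, E4'.1, E5, hωs₀, hgapβ, hδ0]

lemma comparison (β M : ℝ) (hβ : 0 < β) (hM : 0 < M)
    (H : (ℝ × ℝ) → ℝ → ℝ → ℝ) (ω : ℝ → ℝ) (hωmod : IsModulus ω)
    (hω1 : ∀ (y₁ y₂ : ℝ × ℝ) (u p₁ p₂ : ℝ),
        |H y₁ u p₁ - H y₂ u p₂| ≤ ω (‖y₁ - y₂‖ + |p₁ - p₂|))
    (hmono : ∀ (y : ℝ × ℝ) (p r s : ℝ), s ≤ r → β * (r - s) ≤ H y r p - H y s p)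
    (u₁ u₂ : ℝ × ℝ → ℝ)
    (hsub : IsViscositySubsolnOn (fun y q p => p.2 + H y q p.1) u₁ (univ ×ˢ Ioi (0:ℝ)))
    (hsup : IsViscositySupersolnOn (fun y q p => p.2 + H y q p.1) u₂ (univ ×ˢ Ioi (0:ℝ)))
    (hb1 : ∀ p : ℝ × ℝ, 0 ≤ p.2 → |u₁ p| ≤ M)
    (hb2 : ∀ p : ℝ × ℝ, 0 ≤ p.2 → |u₂ p| ≤ M)
    (hcont1 : ContinuousOn u₁ (univ ×ˢ Ici (0:ℝ)))
    (hcont2 : ContinuousOn u₂ (univ ×ˢ Ici (0:ℝ)))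
    (huc : ∀ η : ℝ, 0 < η → ∃ ρ : ℝ, 0 < ρ ∧ ∀ p q : ℝ × ℝ, 0 ≤ p.2 → 0 ≤ q.2 →
        dist p q ≤ ρ → |u₁ p - u₁ q| ≤ η ∧ |u₂ p - u₂ q| ≤ η)
    (hinit : ∀ z : ℝ, u₁ (z, 0) - u₂ (z, 0) ≤ 2*M) :
    ∀ w : ℝ, 0 ≤ w → ∀ z : ℝ, u₁ (z,w) - u₂ (z,w) ≤ 2*M*Real.exp (-(β*w)) := by
  intro w hw z
  by_contra hcon
  push_neg at hcon
  set S : ℝ := u₁ (z,w) - u₂ (z,w) - 2*M*Real.exp (-(β*w)) with hSdef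
  have hSpos : 0 < S := by rw [hSdef]; linarith
  obtain ⟨s₀, hs₀, hωs₀⟩ := modulus_small hωmod (show 0 < β*S/2 by positivity)
  obtain ⟨ρ, hρ, hucρ⟩ := huc (S/8) (by positivity)
  exact core β M hβ hM H ω hωmod.1 hω1 hmono u₁ u₂ hsub hsup hb1 hb2 hcont1 hcont2 hinit
    S hSpos s₀ hs₀ hωs₀ ρ hρ hucρ z w hw hSdef

/-- The long-run convergence step in the proof of Lemma 1 (periodic case): a bounded
uniformly continuous viscosity solution `v` of a `T_p`-periodic, `β`-monotone Cauchy problem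
satisfies `sup_z |v(z, w + T_p) − v(z, w)| ≤ 2 M e^{−β w}`, so for each `τ ∈ [0, T_p]` the
functions `z ↦ v(z, m T_p + τ)` converge uniformly as `m → ∞`, and the limit is
`T_p`-periodic in the sense `h(z, 0) = h(z, T_p)`. -/
theorem stmt_19 (Tp β M : ℝ) (hTp : 0 < Tp) (hβ : 0 < β) (hM : 0 ≤ M)
    (H : (ℝ × ℝ) → ℝ → ℝ → ℝ) (hH : SatisfiesR1R2 H)
    (hper : ∀ (z t u p : ℝ), H (z, t + Tp) u p = H (z, t) u p)
    (hmono : ∀ (y : ℝ × ℝ) (p r s : ℝ), s ≤ r → β * (r - s) ≤ H y r p - H y s p)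
    (v : ℝ × ℝ → ℝ)
    (hvb : ∀ p ∈ (univ ×ˢ Ici (0 : ℝ) : Set (ℝ × ℝ)), |v p| ≤ M)
    (hvc : UniformContinuousOn v (univ ×ˢ Ici (0 : ℝ)))
    (hsol : IsViscositySolnOn (fun y q p => p.2 + H y q p.1) v (univ ×ˢ Ioi (0 : ℝ))) :
    (∀ w : ℝ, 0 ≤ w → ∀ z : ℝ,
      |v (z, w + Tp) - v (z, w)| ≤ 2 * M * Real.exp (-(β * w))) ∧
    ∃ h : ℝ → ℝ → ℝ,
      (∀ τ ∈ Icc (0 : ℝ) Tp,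
        TendstoUniformly (fun (m : ℕ) (z : ℝ) => v (z, m * Tp + τ)) (fun z => h z τ)
          atTop) ∧
      ∀ z : ℝ, h z 0 = h z Tp := by
  obtain ⟨hRuc, ω, hωmod, hω1, hω2⟩ := hH
  have hcont2 : ContinuousOn v (univ ×ˢ Ici (0:ℝ)) := hvc.continuousOn
  have bound : ∀ w : ℝ, 0 ≤ w → ∀ z : ℝ,
      |v (z, w + Tp) - v (z, w)| ≤ 2 * M * Real.exp (-(β * w)) := by
    rcases eq_or_lt_of_le hM with hM0 | hMpos
    · -- M = 0
      intro w hw z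
      have hm1 : ((z, w + Tp) : ℝ × ℝ) ∈ (univ ×ˢ Ici (0:ℝ) : Set (ℝ × ℝ)) :=
        ⟨mem_univ _, show (0:ℝ) ≤ w + Tp by linarith⟩
      have hm2 : ((z, w) : ℝ × ℝ) ∈ (univ ×ˢ Ici (0:ℝ) : Set (ℝ × ℝ)) := ⟨mem_univ _, hw⟩
      have h1 := hvb _ hm1
      have h2 := hvb _ hm2
      rw [← hM0] at h1 h2
      have e1 : v (z, w + Tp) = 0 := abs_eq_zero.mp (le_antisymm h1 (abs_nonneg _))
      have e2 : v (z, w) = 0 := abs_eq_zero.mp (le_antisymm h2 (abs_nonneg _))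
      rw [e1, e2, ← hM0]
      simp
    · -- M > 0
      set u₁ : ℝ × ℝ → ℝ := fun p => v (Tmap Tp p) with hu₁def
      have hsolT : IsViscositySolnOn (fun y q p => p.2 + H y q p.1) u₁
          (univ ×ˢ Ioi (0:ℝ)) := translate_soln Tp hTp H hper v hsol
      have hb2 : ∀ p : ℝ × ℝ, 0 ≤ p.2 → |v p| ≤ M := fun p hp => hvb p ⟨mem_univ _, hp⟩
      have hb1 : ∀ p : ℝ × ℝ, 0 ≤ p.2 → |u₁ p| ≤ M := by
        intro p hp
        exact hvb (Tmap Tp p) ⟨mem_univ _, show (0:ℝ) ≤ p.2 + Tp by linarith⟩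
      have hTc : Continuous (Tmap Tp) := by
        unfold Tmap; exact continuous_fst.prodMk (continuous_snd.add continuous_const)
      have hcont1 : ContinuousOn u₁ (univ ×ˢ Ici (0:ℝ)) := by
        apply hcont2.comp hTc.continuousOn
        intro p hp
        exact ⟨mem_univ _, show (0:ℝ) ≤ p.2 + Tp by have := hp.2; simp at this; linarith⟩
      have hucB : ∀ η : ℝ, 0 < η → ∃ ρ : ℝ, 0 < ρ ∧ ∀ p q : ℝ × ℝ, 0 ≤ p.2 → 0 ≤ q.2 →
          dist p q ≤ ρ → |u₁ p - u₁ q| ≤ η ∧ |v p - v q| ≤ η := by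
        intro η hη
        obtain ⟨ρ', hρ', hP⟩ := (Metric.uniformContinuousOn_iff.mp hvc) η hη
        refine ⟨ρ'/2, by positivity, ?_⟩
        intro p q hp hq hd
        constructor
        · have hdT : dist (Tmap Tp p) (Tmap Tp q) = dist p q := by
            unfold Tmap
            rw [Prod.dist_eq, Prod.dist_eq]
            have h2 : dist (p.2 + Tp) (q.2 + Tp) = dist p.2 q.2 := by
              rw [Real.dist_eq, Real.dist_eq]; congr 1; ring
            rw [h2]
          have := hP (Tmap Tp p) ⟨mem_univ _, show (0:ℝ) ≤ p.2 + Tp by linarith⟩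
            (Tmap Tp q) ⟨mem_univ _, show (0:ℝ) ≤ q.2 + Tp by linarith⟩
            (by rw [hdT]; linarith)
          rw [Real.dist_eq] at this
          exact this.le
        · have := hP p ⟨mem_univ _, hp⟩ q ⟨mem_univ _, hq⟩ (by linarith)
          rw [Real.dist_eq] at this
          exact this.le
      have hucA : ∀ η : ℝ, 0 < η → ∃ ρ : ℝ, 0 < ρ ∧ ∀ p q : ℝ × ℝ, 0 ≤ p.2 → 0 ≤ q.2 →
          dist p q ≤ ρ → |v p - v q| ≤ η ∧ |u₁ p - u₁ q| ≤ η := by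
        intro η hη
        obtain ⟨ρ, hρ, hP⟩ := hucB η hη
        exact ⟨ρ, hρ, fun p q hp hq hd => ⟨(hP p q hp hq hd).2, (hP p q hp hq hd).1⟩⟩
      have hinitA : ∀ z : ℝ, u₁ (z, 0) - v (z, 0) ≤ 2*M := by
        intro z
        have h1 := abs_le.mp (hb1 (z,0) le_rfl)
        have h2 := abs_le.mp (hb2 (z,0) le_rfl)
        linarith [h1.2, h2.1]
      have hinitB : ∀ z : ℝ, v (z, 0) - u₁ (z, 0) ≤ 2*M := by
        intro z
        have h1 := abs_le.mp (hb1 (z,0) le_rfl)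
        have h2 := abs_le.mp (hb2 (z,0) le_rfl)
        linarith [h1.1, h2.2]
      have cmp1 := comparison β M hβ hMpos H ω hωmod hω1 hmono u₁ v
        hsolT.1 hsol.2 hb1 hb2 hcont1 hcont2 hucB hinitA
      have cmp2 := comparison β M hβ hMpos H ω hωmod hω1 hmono v u₁
        hsol.1 hsolT.2 hb2 hb1 hcont2 hcont1 hucA hinitB
      intro w hw z
      have c1 := cmp1 w hw z
      have c2 := cmp2 w hw z
      have e : u₁ (z,w) = v (z, w + Tp) := rfl
      rw [e] at c1 c2
      exact abs_le.mpr ⟨by linarith, by linarith⟩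
  exact ⟨bound, part2 Tp β M hTp hβ hM v bound⟩
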